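/- arXiv:2108.07589 — 2 statements merged into one kernel-verified Lean document; each statement's English description precedes it below -/
import Mathlib

section
/- Let ρ̃, q̃ ∈ ℝ^{K+1} with P(ρ̃) invertible, and set ρ(ξ) := ∑ ρ̃_i φ_i(ξ), q(ξ) := ∑ q̃_i φ_i(ξ). Suppose there exist v, s ∈ span{φ_0,…,φ_K}, say v(ξ) = ∑ ṽ_i φ_i(ξ) and s(ξ) = ∑ s̃_i φ_i(ξ), such that ρ(ξ)v(ξ) = q(ξ) and q(ξ)v(ξ) = s(ξ) for a.e. ξ ∈ Ω (so that v = q/ρ and s = q²/ρ whenever ρ ≠ 0). Then s̃ = P(q̃)P(ρ̃)^{-1}q̃; in particular the gPC coefficients of q²/ρ satisfy the closure relation ∫_Ω s(ξ) φ_i(ξ) f_Ξ(ξ) dξ = (P(q̃)P(ρ̃)^{-1}q̃)_i for all i = 0,…,K. -/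
set_option maxHeartbeats 1000000


open MeasureTheory

/-- the closure relation for `q²/ρ`: if `ρ v = q` and `q v = s`
pointwise a.e. with `v, s` in the span of the basis, then the gPC coefficients
of `s = q²/ρ` are given by `s̃ = P(q̃) P(ρ̃)⁻¹ q̃`. -/
theorem gpc_closure_relation
    (K : ℕ) (Ω : Set ℝ) (hΩ : MeasurableSet Ω)
    -- probability density f_Ξ on Ω
    (fΞ : ℝ → ℝ) (hfΞ : ∀ ξ ∈ Ω, 0 ≤ fΞ ξ) (hprob : ∫ ξ in Ω, fΞ ξ = 1)
    -- orthonormal basis functions φ_0, …, φ_K in L²(Ω, f_Ξ dξ)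
    (φ : Fin (K + 1) → ℝ → ℝ)
    (horth : ∀ i j, ∫ ξ in Ω, φ i ξ * φ j ξ * fΞ ξ = if i = j then (1 : ℝ) else 0)
    -- triple products assumed integrable; matrices M_ℓ
    (htriple : ∀ i j ℓ, IntegrableOn (fun ξ => φ i ξ * φ j ξ * φ ℓ ξ * fΞ ξ) Ω)
    (Mmat : Fin (K + 1) → Matrix (Fin (K + 1)) (Fin (K + 1)) ℝ)
    (hMmat : ∀ ℓ i j, Mmat ℓ i j = ∫ ξ in Ω, φ i ξ * φ j ξ * φ ℓ ξ * fΞ ξ)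
    -- coefficient vectors and reconstructed random variables
    (ρc qc vc sc : Fin (K + 1) → ℝ)
    (ρ q v s : ℝ → ℝ)
    (hρ : ∀ ξ, ρ ξ = ∑ i, ρc i * φ i ξ)
    (hq : ∀ ξ, q ξ = ∑ i, qc i * φ i ξ)
    (hv : ∀ ξ, v ξ = ∑ i, vc i * φ i ξ)
    (hs : ∀ ξ, s ξ = ∑ i, sc i * φ i ξ)
    -- P(ρ̃) is invertible
    (hinv : IsUnit (∑ ℓ, ρc ℓ • Mmat ℓ))
    -- ρ v = q and q v = s a.e. (so v = q/ρ and s = q²/ρ whenever ρ ≠ 0)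
    (hae : ∀ᵐ ξ ∂(volume.restrict Ω), ρ ξ * v ξ = q ξ ∧ q ξ * v ξ = s ξ) :
    sc = ((∑ ℓ, qc ℓ • Mmat ℓ) * (∑ ℓ, ρc ℓ • Mmat ℓ)⁻¹).mulVec qc
    ∧ ∀ i, ∫ ξ in Ω, s ξ * φ i ξ * fΞ ξ
        = ((∑ ℓ, qc ℓ • Mmat ℓ) * (∑ ℓ, ρc ℓ • Mmat ℓ)⁻¹).mulVec qc i := by
  have hfae : ∀ᵐ ξ ∂(volume.restrict Ω), 0 ≤ fΞ ξ :=
    (ae_restrict_iff' hΩ).2 (ae_of_all _ hfΞ)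
  -- diagonal products are integrable
  have hAint : ∀ i, IntegrableOn (fun ξ => φ i ξ * φ i ξ * fΞ ξ) Ω := by
    intro i
    by_contra h
    have h0 := integral_undef h
    rw [horth i i] at h0
    simp at h0
  have hfint : IntegrableOn fΞ Ω := by
    by_contra h
    have h0 := integral_undef h
    rw [hprob] at h0
    simp at h0
  -- φ i * fΞ is a.e. strongly measurable
  have hw : ∀ i, AEStronglyMeasurable (fun ξ => φ i ξ * fΞ ξ) (volume.restrict Ω) := by
    intro i
    have hm : AEStronglyMeasurable
        (fun ξ => (φ i ξ * φ i ξ * φ i ξ * fΞ ξ) * fΞ ξ / (φ i ξ * φ i ξ * fΞ ξ))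
        (volume.restrict Ω) :=
      (((htriple i i i).aestronglyMeasurable.aemeasurable.mul
        hfint.aestronglyMeasurable.aemeasurable).div
        (hAint i).aestronglyMeasurable.aemeasurable).aestronglyMeasurable
    refine hm.congr ?_
    filter_upwards [hfae] with ξ hf
    by_cases hφ : φ i ξ = 0
    · simp [hφ]
    by_cases hf0 : fΞ ξ = 0
    · simp [hf0]
    · rw [div_eq_iff (mul_ne_zero (mul_ne_zero hφ hφ) hf0)]
      ring
  -- pairwise products are a.e. strongly measurable
  have hu : ∀ i j, AEStronglyMeasurable (fun ξ => φ i ξ * φ j ξ * fΞ ξ) (volume.restrict Ω) := by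
    intro i j
    have hm : AEStronglyMeasurable
        (fun ξ => (φ i ξ * fΞ ξ) * (φ j ξ * fΞ ξ) / fΞ ξ) (volume.restrict Ω) :=
      (((hw i).aemeasurable.mul (hw j).aemeasurable).div
        hfint.aestronglyMeasurable.aemeasurable).aestronglyMeasurable
    refine hm.congr ?_
    filter_upwards [hfae] with ξ hf
    by_cases hf0 : fΞ ξ = 0
    · simp [hf0]
    · rw [div_eq_iff hf0]
      ring
  -- pairwise products are integrable
  have hpair : ∀ i j, IntegrableOn (fun ξ => φ i ξ * φ j ξ * fΞ ξ) Ω := by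
    intro i j
    refine Integrable.mono'
      (g := fun ξ => (φ i ξ * φ i ξ * fΞ ξ + φ j ξ * φ j ξ * fΞ ξ) / 2)
      (((hAint i).add (hAint j)).div_const 2) (hu i j) ?_
    filter_upwards [hfae] with ξ hf
    rw [Real.norm_eq_abs, abs_mul, abs_of_nonneg hf]
    have h1 : |φ i ξ * φ j ξ| ≤ (φ i ξ * φ i ξ + φ j ξ * φ j ξ) / 2 := by
      rcases abs_cases (φ i ξ * φ j ξ) with ⟨he, _⟩ | ⟨he, _⟩ <;> rw [he] <;>
        nlinarith [sq_nonneg (φ i ξ - φ j ξ), sq_nonneg (φ i ξ + φ j ξ)]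
    nlinarith [abs_nonneg (φ i ξ * φ j ξ)]
  -- coefficient extraction lemma
  have hcoeff : ∀ (c : Fin (K + 1) → ℝ) (i : Fin (K + 1)),
      ∫ ξ in Ω, (∑ j, c j * φ j ξ) * φ i ξ * fΞ ξ = c i := by
    intro c i
    have hrw : ∀ ξ, (∑ j, c j * φ j ξ) * φ i ξ * fΞ ξ
        = ∑ j, c j * (φ j ξ * φ i ξ * fΞ ξ) := by
      intro ξ
      rw [Finset.sum_mul, Finset.sum_mul]
      exact Finset.sum_congr rfl fun j _ => by ring
    simp_rw [hrw]
    rw [integral_finset_sum _ (fun j _ => ((hpair j i).const_mul (c j)))]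
    simp_rw [integral_const_mul, horth]
    simp
  -- double-sum lemma
  have hdouble : ∀ (a b : Fin (K + 1) → ℝ) (i : Fin (K + 1)),
      ∫ ξ in Ω, (∑ ℓ, a ℓ * φ ℓ ξ) * (∑ j, b j * φ j ξ) * φ i ξ * fΞ ξ
        = ((∑ ℓ, a ℓ • Mmat ℓ).mulVec b) i := by
    intro a b i
    have hrw : ∀ ξ, (∑ ℓ, a ℓ * φ ℓ ξ) * (∑ j, b j * φ j ξ) * φ i ξ * fΞ ξ
        = ∑ ℓ, ∑ j, a ℓ * b j * (φ i ξ * φ j ξ * φ ℓ ξ * fΞ ξ) := by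
      intro ξ
      simp only [Finset.sum_mul, Finset.mul_sum]
      rw [Finset.sum_comm]
      exact Finset.sum_congr rfl fun ℓ _ => Finset.sum_congr rfl fun j _ => by ring
    simp_rw [hrw]
    rw [integral_finset_sum _
      (fun ℓ _ => integrable_finset_sum _ (fun j _ => ((htriple i j ℓ).const_mul _)))]
    simp_rw [integral_finset_sum _ (fun j _ => ((htriple i _ _).const_mul _)),
      integral_const_mul]
    simp only [Matrix.mulVec, dotProduct, Finset.sum_apply, Matrix.sum_apply,
      Matrix.smul_apply, smul_eq_mul, hMmat, Finset.sum_mul]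
    rw [Finset.sum_comm]
    exact Finset.sum_congr rfl fun ℓ _ => Finset.sum_congr rfl fun j _ => by ring
  -- the linear relations
  have hAv : (∑ ℓ, ρc ℓ • Mmat ℓ).mulVec vc = qc := by
    funext i
    have h1 : ∫ ξ in Ω, ρ ξ * v ξ * φ i ξ * fΞ ξ
        = ((∑ ℓ, ρc ℓ • Mmat ℓ).mulVec vc) i := by
      simp_rw [hρ, hv]; exact hdouble ρc vc i
    have h2 : ∫ ξ in Ω, q ξ * φ i ξ * fΞ ξ = qc i := by
      simp_rw [hq]; exact hcoeff qc i
    have h3 : ∫ ξ in Ω, ρ ξ * v ξ * φ i ξ * fΞ ξ = ∫ ξ in Ω, q ξ * φ i ξ * fΞ ξ := by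
      refine integral_congr_ae ?_
      filter_upwards [hae] with ξ hξ
      rw [hξ.1]
    rw [← h1, h3, h2]
  have hBv : (∑ ℓ, qc ℓ • Mmat ℓ).mulVec vc = sc := by
    funext i
    have h1 : ∫ ξ in Ω, q ξ * v ξ * φ i ξ * fΞ ξ
        = ((∑ ℓ, qc ℓ • Mmat ℓ).mulVec vc) i := by
      simp_rw [hq, hv]; exact hdouble qc vc i
    have h2 : ∫ ξ in Ω, s ξ * φ i ξ * fΞ ξ = sc i := by
      simp_rw [hs]; exact hcoeff sc i
    have h3 : ∫ ξ in Ω, q ξ * v ξ * φ i ξ * fΞ ξ = ∫ ξ in Ω, s ξ * φ i ξ * fΞ ξ := by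
      refine integral_congr_ae ?_
      filter_upwards [hae] with ξ hξ
      rw [hξ.2]
    rw [← h1, h3, h2]
  -- matrix algebra
  have hdet : IsUnit (∑ ℓ, ρc ℓ • Mmat ℓ).det :=
    (Matrix.isUnit_iff_isUnit_det _).1 hinv
  have hvc : (∑ ℓ, ρc ℓ • Mmat ℓ)⁻¹.mulVec qc = vc := by
    rw [← hAv, Matrix.mulVec_mulVec, Matrix.nonsing_inv_mul _ hdet, Matrix.one_mulVec]
  have key : ((∑ ℓ, qc ℓ • Mmat ℓ) * (∑ ℓ, ρc ℓ • Mmat ℓ)⁻¹).mulVec qc = sc := by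
    rw [← Matrix.mulVec_mulVec, hvc, hBv]
  refine ⟨key.symm, fun i => ?_⟩
  have h2 : ∫ ξ in Ω, s ξ * φ i ξ * fΞ ξ = sc i := by
    simp_rw [hs]; exact hcoeff sc i
  rw [h2, ← key]
end

section
/- Let ρ̃, q̃ ∈ C¹([0,∞) × ℝ; ℝ^{K+1}) and define the random fields ρ(t,x,ξ) := ∑_{i=0}^K ρ̃_i(t,x)φ_i(ξ) and q(t,x,ξ) := ∑_{i=0}^K q̃_i(t,x)φ_i(ξ). Assume: (i) for a.e. ξ ∈ Ω the pair (ρ,q)(·,·,ξ) satisfies pointwise the Aw–Rascle–Zhang system with hesitation h(ρ)=ρ: ∂_t ρ + ∂_x(q − ρ²) = 0 and ∂_t q + ∂_x(q²/ρ − qρ) = (1/ε)(ρ V_eq(ρ) + ρ² − q), with ρ(t,x,ξ) ≠ 0; (ii) for every (t,x) the functions ξ ↦ ρ², ρq, q/ρ, q²/ρ, and V_eq(ρ) all lie in span{φ_0,…,φ_K}, with V_eq(ρ(t,x,ξ)) = ∑_ℓ Ṽ_ℓ(t,x)φ_ℓ(ξ); (iii) P(ρ̃(t,x)) is invertible for all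 (t,x). Then the coefficient functions satisfy the stochastic-Galerkin Aw–Rascle–Zhang system: for every i, ∂_t ρ̃_i + ∂_x[q̃_i − (P(ρ̃)ρ̃)_i] = 0 and ∂_t q̃_i + ∂_x[(P(q̃)P(ρ̃)^{-1}q̃)_i − (P(ρ̃)q̃)_i] = (1/ε)[(P(Ṽ)ρ̃)_i + (P(ρ̃)ρ̃)_i − q̃_i]. -/
open MeasureTheory

private lemma det_diffAt {n : ℕ} {M : ℝ → Matrix (Fin n) (Fin n) ℝ} {x : ℝ}
    (h : ∀ i j, DifferentiableAt ℝ (fun y => M y i j) x) :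
    DifferentiableAt ℝ (fun y => (M y).det) x := by
  simp only [Matrix.det_apply']
  exact DifferentiableAt.fun_sum fun σ _ =>
    (DifferentiableAt.fun_finsetProd fun i _ => h (σ i) i).const_mul _

private lemma inv_entry_diffAt {n : ℕ} {M : ℝ → Matrix (Fin n) (Fin n) ℝ} {x : ℝ}
    (h : ∀ i j, DifferentiableAt ℝ (fun y => M y i j) x)
    (hdet : (M x).det ≠ 0) (i j : Fin n) :
    DifferentiableAt ℝ (fun y => (M y)⁻¹ i j) x := by
  have hadj : DifferentiableAt ℝ (fun y => (M y).adjugate i j) x := by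
    simp only [Matrix.adjugate_apply]
    refine det_diffAt fun k l => ?_
    simp only [Matrix.updateRow_apply]
    by_cases hk : k = j <;> simp [hk, h, differentiableAt_const]
  have heq : (fun y => (M y)⁻¹ i j) = fun y => ((M y).det)⁻¹ * (M y).adjugate i j := by
    funext y
    rw [Matrix.inv_def, Ring.inverse_eq_inv']
    simp [Matrix.smul_apply, smul_eq_mul]
  rw [heq]
  exact ((det_diffAt h).inv hdet).mul hadj

private lemma pair_integrable {K : ℕ} {Ω : Set ℝ} (hΩ : MeasurableSet Ω) {fΞ : ℝ → ℝ}
    (hfΞ : ∀ ξ ∈ Ω, 0 ≤ fΞ ξ) {φ : Fin (K + 1) → ℝ → ℝ}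
    (horth : ∀ i j, ∫ ξ in Ω, φ i ξ * φ j ξ * fΞ ξ = if i = j then (1 : ℝ) else 0)
    (htriple : ∀ i j ℓ, IntegrableOn (fun ξ => φ i ξ * φ j ξ * φ ℓ ξ * fΞ ξ) Ω)
    (i j : Fin (K + 1)) :
    IntegrableOn (fun ξ => φ i ξ * φ j ξ * fΞ ξ) Ω := by
  have hdiag : ∀ k, IntegrableOn (fun ξ => φ k ξ * φ k ξ * fΞ ξ) Ω := by
    intro k
    by_contra hcon
    have h := horth k k
    rw [integral_undef hcon] at h
    simp at h
  have hmem : ∀ᵐ ξ ∂(volume.restrict Ω), ξ ∈ Ω := ae_restrict_mem hΩ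
  have hA : AEMeasurable (fun ξ => φ i ξ * φ i ξ * φ j ξ * fΞ ξ) (volume.restrict Ω) :=
    (htriple i i j).aemeasurable
  have hB : AEMeasurable (fun ξ => φ i ξ * φ j ξ * φ j ξ * fΞ ξ) (volume.restrict Ω) :=
    (htriple i j j).aemeasurable
  have hD : AEMeasurable (fun ξ => φ i ξ * φ i ξ * fΞ ξ) (volume.restrict Ω) :=
    (hdiag i).aemeasurable
  have hE : AEMeasurable (fun ξ => φ j ξ * φ j ξ * fΞ ξ) (volume.restrict Ω) :=
    (hdiag j).aemeasurable
  have hout : Measurable (fun p : ℝ × ℝ => (if p.1 < 0 then (-1 : ℝ) else 1) * Real.sqrt p.2) :=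
    (Measurable.ite (measurableSet_lt measurable_fst measurable_const) measurable_const
      measurable_const).mul (Real.continuous_sqrt.measurable.comp measurable_snd)
  have hcomp : AEMeasurable (fun ξ =>
      (if (φ i ξ * φ i ξ * φ j ξ * fΞ ξ) * (φ i ξ * φ j ξ * φ j ξ * fΞ ξ) < 0 then (-1 : ℝ) else 1)
        * Real.sqrt ((φ i ξ * φ i ξ * fΞ ξ) * (φ j ξ * φ j ξ * fΞ ξ))) (volume.restrict Ω) :=
    hout.comp_aemeasurable ((hA.mul hB).prodMk (hD.mul hE))
  have hmeas : AEMeasurable (fun ξ => φ i ξ * φ j ξ * fΞ ξ) (volume.restrict Ω) := by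
    refine hcomp.congr ?_
    filter_upwards [hmem] with ξ hξ
    set a := φ i ξ; set b := φ j ξ; set f := fΞ ξ
    have hf : 0 ≤ f := hfΞ ξ hξ
    have hsq : (a * a * f) * (b * b * f) = (a * b * f) ^ 2 := by ring
    rw [hsq, Real.sqrt_sq_eq_abs]
    rcases lt_trichotomy (a * b * f) 0 with hlt | heq | hgt
    · have hab : a * b < 0 := by
        rcases hf.lt_or_eq with hf' | hf'
        · nlinarith
        · exfalso; rw [← hf'] at hlt; simp at hlt
      have h2 : (a * a * b * f) * (a * b * b * f) = (a * b) * (a * b * f) ^ 2 := by ring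
      have h3 : 0 < (a * b * f) ^ 2 := by nlinarith
      have : (a * a * b * f) * (a * b * b * f) < 0 := by
        rw [h2]; exact mul_neg_of_neg_of_pos hab h3
      rw [if_pos this, abs_of_neg hlt]; ring
    · rw [heq]
      have h2 : (a * a * b * f) * (a * b * b * f) = (a * b) * (a * b * f) ^ 2 := by ring
      have : (a * a * b * f) * (a * b * b * f) = 0 := by rw [h2, heq]; ring
      simp [this]
    · have hab : 0 < a * b := by
        rcases hf.lt_or_eq with hf' | hf'
        · nlinarith
        · exfalso; rw [← hf'] at hgt; simp at hgt
      have h2 : (a * a * b * f) * (a * b * b * f) = (a * b) * (a * b * f) ^ 2 := by ring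
      have : ¬ (a * a * b * f) * (a * b * b * f) < 0 := by
        rw [h2]; exact not_lt.2 (mul_nonneg hab.le (sq_nonneg _))
      rw [if_neg this, abs_of_pos hgt]; ring
  refine Integrable.mono' (g := fun ξ => φ i ξ * φ i ξ * fΞ ξ + φ j ξ * φ j ξ * fΞ ξ)
    ((hdiag i).add (hdiag j)) hmeas.aestronglyMeasurable ?_
  filter_upwards [hmem] with ξ hξ
  have hf : 0 ≤ fΞ ξ := hfΞ ξ hξ
  rw [Real.norm_eq_abs, abs_mul, abs_of_nonneg hf]
  nlinarith [sq_nonneg (|φ i ξ| - |φ j ξ|), abs_mul (φ i ξ) (φ j ξ), abs_nonneg (φ i ξ * φ j ξ),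
    sq_abs (φ i ξ), sq_abs (φ j ξ), mul_le_mul_of_nonneg_right
      (abs_mul_abs_self (φ i ξ)).le hf]

private lemma span_integrable {K : ℕ} {Ω : Set ℝ} {fΞ : ℝ → ℝ} {φ : Fin (K + 1) → ℝ → ℝ}
    (hpair : ∀ i j, IntegrableOn (fun ξ => φ i ξ * φ j ξ * fΞ ξ) Ω)
    {g : ℝ → ℝ} {c : Fin (K + 1) → ℝ}
    (hg : ∀ᵐ ξ ∂(volume.restrict Ω), g ξ = ∑ ℓ, c ℓ * φ ℓ ξ) (i : Fin (K + 1)) :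
    IntegrableOn (fun ξ => g ξ * φ i ξ * fΞ ξ) Ω := by
  have hint : IntegrableOn (fun ξ => ∑ ℓ, c ℓ * (φ ℓ ξ * φ i ξ * fΞ ξ)) Ω :=
    integrable_finset_sum _ fun ℓ _ => ((hpair ℓ i).const_mul _)
  refine hint.congr ?_
  filter_upwards [hg] with ξ h
  rw [h, Finset.sum_mul, Finset.sum_mul]
  exact Finset.sum_congr rfl fun ℓ _ => by ring

private lemma proj_eq {K : ℕ} {Ω : Set ℝ} {fΞ : ℝ → ℝ} {φ : Fin (K + 1) → ℝ → ℝ}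
    (horth : ∀ i j, ∫ ξ in Ω, φ i ξ * φ j ξ * fΞ ξ = if i = j then (1 : ℝ) else 0)
    (hpair : ∀ i j, IntegrableOn (fun ξ => φ i ξ * φ j ξ * fΞ ξ) Ω)
    {g : ℝ → ℝ} {c : Fin (K + 1) → ℝ}
    (hg : ∀ᵐ ξ ∂(volume.restrict Ω), g ξ = ∑ ℓ, c ℓ * φ ℓ ξ) (i : Fin (K + 1)) :
    ∫ ξ in Ω, g ξ * φ i ξ * fΞ ξ = c i := by
  have h1 : ∫ ξ in Ω, g ξ * φ i ξ * fΞ ξ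
      = ∫ ξ in Ω, ∑ ℓ, c ℓ * (φ ℓ ξ * φ i ξ * fΞ ξ) := by
    refine integral_congr_ae ?_
    filter_upwards [hg] with ξ h
    rw [h, Finset.sum_mul, Finset.sum_mul]
    exact Finset.sum_congr rfl fun ℓ _ => by ring
  rw [h1, integral_finset_sum _ fun ℓ _ => ((hpair ℓ i).const_mul _)]
  have h2 : ∀ ℓ : Fin (K + 1), ∫ ξ in Ω, c ℓ * (φ ℓ ξ * φ i ξ * fΞ ξ)
      = c ℓ * if ℓ = i then (1 : ℝ) else 0 := by
    intro ℓ
    rw [MeasureTheory.integral_const_mul, horth ℓ i]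
  simp_rw [h2]
  simp [Finset.sum_ite_eq]

private lemma prod_span_integrable {K : ℕ} {Ω : Set ℝ} {fΞ : ℝ → ℝ} {φ : Fin (K + 1) → ℝ → ℝ}
    (htriple : ∀ i j ℓ, IntegrableOn (fun ξ => φ i ξ * φ j ξ * φ ℓ ξ * fΞ ξ) Ω)
    {g : ℝ → ℝ} {u c : Fin (K + 1) → ℝ}
    (hg : ∀ᵐ ξ ∂(volume.restrict Ω), g ξ = ∑ ℓ, c ℓ * φ ℓ ξ) (i : Fin (K + 1)) :
    IntegrableOn (fun ξ => (∑ j, u j * φ j ξ) * g ξ * φ i ξ * fΞ ξ) Ω := by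
  have hint : IntegrableOn
      (fun ξ => ∑ j, ∑ ℓ, u j * c ℓ * (φ i ξ * φ j ξ * φ ℓ ξ * fΞ ξ)) Ω :=
    integrable_finset_sum _ fun j _ =>
      integrable_finset_sum _ fun ℓ _ => ((htriple i j ℓ).const_mul _)
  refine hint.congr ?_
  filter_upwards [hg] with ξ h
  rw [h, Finset.sum_mul_sum]
  rw [Finset.sum_mul, Finset.sum_mul]
  refine Finset.sum_congr rfl fun j _ => ?_
  rw [Finset.sum_mul, Finset.sum_mul]
  exact Finset.sum_congr rfl fun ℓ _ => by ring

private lemma proj_mul {K : ℕ} {Ω : Set ℝ} {fΞ : ℝ → ℝ} {φ : Fin (K + 1) → ℝ → ℝ}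
    (htriple : ∀ i j ℓ, IntegrableOn (fun ξ => φ i ξ * φ j ξ * φ ℓ ξ * fΞ ξ) Ω)
    {Mmat : Fin (K + 1) → Matrix (Fin (K + 1)) (Fin (K + 1)) ℝ}
    (hMmat : ∀ ℓ i j, Mmat ℓ i j = ∫ ξ in Ω, φ i ξ * φ j ξ * φ ℓ ξ * fΞ ξ)
    {g : ℝ → ℝ} {u c : Fin (K + 1) → ℝ}
    (hg : ∀ᵐ ξ ∂(volume.restrict Ω), g ξ = ∑ ℓ, c ℓ * φ ℓ ξ) (i : Fin (K + 1)) :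
    ∫ ξ in Ω, (∑ j, u j * φ j ξ) * g ξ * φ i ξ * fΞ ξ
      = ∑ j, ∑ ℓ, u j * c ℓ * Mmat ℓ i j := by
  have h1 : ∫ ξ in Ω, (∑ j, u j * φ j ξ) * g ξ * φ i ξ * fΞ ξ
      = ∫ ξ in Ω, ∑ j, ∑ ℓ, u j * c ℓ * (φ i ξ * φ j ξ * φ ℓ ξ * fΞ ξ) := by
    refine integral_congr_ae ?_
    filter_upwards [hg] with ξ h
    rw [h, Finset.sum_mul_sum]
    rw [Finset.sum_mul, Finset.sum_mul]
    refine Finset.sum_congr rfl fun j _ => ?_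
    rw [Finset.sum_mul, Finset.sum_mul]
    exact Finset.sum_congr rfl fun ℓ _ => by ring
  rw [h1, integral_finset_sum _ fun j _ =>
    integrable_finset_sum _ fun ℓ _ => ((htriple i j ℓ).const_mul _)]
  refine Finset.sum_congr rfl fun j _ => ?_
  rw [integral_finset_sum _ fun ℓ _ => ((htriple i j ℓ).const_mul _)]
  refine Finset.sum_congr rfl fun ℓ _ => ?_
  rw [MeasureTheory.integral_const_mul, hMmat]

private lemma mulVec_form {n : ℕ} (Mmat : Fin n → Matrix (Fin n) (Fin n) ℝ)
    (v w : Fin n → ℝ) (i : Fin n) :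
    (∑ ℓ, v ℓ • Mmat ℓ).mulVec w i = ∑ j, ∑ ℓ, v ℓ * Mmat ℓ i j * w j := by
  simp only [Matrix.mulVec, dotProduct, Matrix.sum_apply, Matrix.smul_apply,
    smul_eq_mul, Finset.sum_mul]

private lemma sum2_swap {n : ℕ} {Mmat : Fin n → Matrix (Fin n) (Fin n) ℝ}
    (Msym : ∀ ℓ i j, Mmat ℓ i j = Mmat j i ℓ) (F : Fin n → Fin n → ℝ) (i : Fin n) :
    ∑ j, ∑ ℓ, F j ℓ * Mmat ℓ i j = ∑ j, ∑ ℓ, F ℓ j * Mmat ℓ i j := by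
  rw [Finset.sum_comm]
  refine Finset.sum_congr rfl fun j _ => Finset.sum_congr rfl fun ℓ _ => ?_
  rw [Msym ℓ i j]

private lemma alg1 {n : ℕ} (Mmat : Fin n → Matrix (Fin n) (Fin n) ℝ)
    (u c : Fin n → ℝ) (i : Fin n) :
    ∑ j, ∑ ℓ, u j * c ℓ * Mmat ℓ i j = (∑ ℓ, c ℓ • Mmat ℓ).mulVec u i := by
  rw [mulVec_form]
  exact Finset.sum_congr rfl fun j _ => Finset.sum_congr rfl fun ℓ _ => by ring

private lemma alg2 {n : ℕ} {Mmat : Fin n → Matrix (Fin n) (Fin n) ℝ}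
    (Msym : ∀ ℓ i j, Mmat ℓ i j = Mmat j i ℓ)
    (u c : Fin n → ℝ) (i : Fin n) :
    ∑ j, ∑ ℓ, u j * c ℓ * Mmat ℓ i j = (∑ ℓ, u ℓ • Mmat ℓ).mulVec c i := by
  rw [sum2_swap Msym (fun j ℓ => u j * c ℓ) i]
  rw [← alg1 Mmat c u i]
  exact Finset.sum_congr rfl fun j _ => Finset.sum_congr rfl fun ℓ _ => by ring

/-- consistency part of Theorem 1: if the random fields
`ρ(t,x,ξ) = ∑ ρ̃_i(t,x)φ_i(ξ)`, `q(t,x,ξ) = ∑ q̃_i(t,x)φ_i(ξ)` solve the random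
Aw–Rascle–Zhang system (with hesitation `h(ρ) = ρ`) pointwise a.e. in `ξ`, and
all the nonlinear terms lie in the span of the basis, then the coefficient
functions `(ρ̃, q̃)` solve the stochastic-Galerkin Aw–Rascle–Zhang system. -/
theorem random_arz_coefficients_solve_sg_arz
    (K : ℕ) (ε : ℝ) (hε : 0 < ε)
    (Ω : Set ℝ) (hΩ : MeasurableSet Ω)
    -- probability density f_Ξ on Ω
    (fΞ : ℝ → ℝ) (hfΞ : ∀ ξ ∈ Ω, 0 ≤ fΞ ξ) (hprob : ∫ ξ in Ω, fΞ ξ = 1)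
    -- orthonormal basis functions with integrable triple products
    (φ : Fin (K + 1) → ℝ → ℝ)
    (horth : ∀ i j, ∫ ξ in Ω, φ i ξ * φ j ξ * fΞ ξ = if i = j then (1 : ℝ) else 0)
    (htriple : ∀ i j ℓ, IntegrableOn (fun ξ => φ i ξ * φ j ξ * φ ℓ ξ * fΞ ξ) Ω)
    -- the matrices M_ℓ defining P(ũ) = ∑ ũ_ℓ M_ℓ
    (Mmat : Fin (K + 1) → Matrix (Fin (K + 1)) (Fin (K + 1)) ℝ)
    (hMmat : ∀ ℓ i j, Mmat ℓ i j = ∫ ξ in Ω, φ i ξ * φ j ξ * φ ℓ ξ * fΞ ξ)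
    -- equilibrium velocity
    (Veq : ℝ → ℝ)
    -- C¹ coefficient functions ρ̃, q̃ and coefficients Ṽ of V_eq(ρ)
    (ρt qt Vt : ℝ → ℝ → Fin (K + 1) → ℝ)
    (hρC1 : ∀ i, ContDiff ℝ 1 (fun p : ℝ × ℝ => ρt p.1 p.2 i))
    (hqC1 : ∀ i, ContDiff ℝ 1 (fun p : ℝ × ℝ => qt p.1 p.2 i))
    -- the random fields ρ and q
    (ρf qf : ℝ → ℝ → ℝ → ℝ)
    (hρf : ∀ t x ξ, ρf t x ξ = ∑ i, ρt t x i * φ i ξ)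
    (hqf : ∀ t x ξ, qf t x ξ = ∑ i, qt t x i * φ i ξ)
    -- (i) for a.e. ξ: (ρ,q)(·,·,ξ) solves the ARZ system with h(ρ)=ρ, and ρ ≠ 0
    (hae : ∀ᵐ ξ ∂(volume.restrict Ω), ∀ t x : ℝ,
      ρf t x ξ ≠ 0 ∧
      deriv (fun s => ρf s x ξ) t
        + deriv (fun y => qf t y ξ - (ρf t y ξ) ^ 2) x = 0 ∧
      deriv (fun s => qf s x ξ) t
        + deriv (fun y =>
            (qf t y ξ) ^ 2 / ρf t y ξ - qf t y ξ * ρf t y ξ) x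
        = (1 / ε) * (ρf t x ξ * Veq (ρf t x ξ)
            + (ρf t x ξ) ^ 2 - qf t x ξ))
    -- (ii) span hypotheses: ρ², ρq, q/ρ, q²/ρ and V_eq(ρ) lie in span{φ_0,…,φ_K}
    (hVspan : ∀ t x, ∀ᵐ ξ ∂(volume.restrict Ω),
      Veq (ρf t x ξ) = ∑ ℓ, Vt t x ℓ * φ ℓ ξ)
    (hspan : ∀ t x, ∃ a b c d : Fin (K + 1) → ℝ,
      ∀ᵐ ξ ∂(volume.restrict Ω),
        (ρf t x ξ) ^ 2 = ∑ ℓ, a ℓ * φ ℓ ξ ∧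
        ρf t x ξ * qf t x ξ = ∑ ℓ, b ℓ * φ ℓ ξ ∧
        qf t x ξ / ρf t x ξ = ∑ ℓ, c ℓ * φ ℓ ξ ∧
        (qf t x ξ) ^ 2 / ρf t x ξ = ∑ ℓ, d ℓ * φ ℓ ξ)
    -- (iii) P(ρ̃(t,x)) is invertible
    (hinv : ∀ t x, IsUnit (∑ ℓ, ρt t x ℓ • Mmat ℓ)) :
    ∀ t x i,
      (deriv (fun s => ρt s x i) t
        + deriv (fun y => qt t y i
            - (∑ ℓ, ρt t y ℓ • Mmat ℓ).mulVec (ρt t y) i) x = 0) ∧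
      (deriv (fun s => qt s x i) t
        + deriv (fun y =>
            ((∑ ℓ, qt t y ℓ • Mmat ℓ)
              * (∑ ℓ, ρt t y ℓ • Mmat ℓ)⁻¹).mulVec (qt t y) i
            - (∑ ℓ, ρt t y ℓ • Mmat ℓ).mulVec (qt t y) i) x
        = (1 / ε) * ((∑ ℓ, Vt t x ℓ • Mmat ℓ).mulVec (ρt t x) i
            + (∑ ℓ, ρt t x ℓ • Mmat ℓ).mulVec (ρt t x) i - qt t x i)) := by
  have hpair : ∀ i j, IntegrableOn (fun ξ => φ i ξ * φ j ξ * fΞ ξ) Ω :=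
    pair_integrable hΩ hfΞ horth htriple
  have Msym : ∀ ℓ i j, Mmat ℓ i j = Mmat j i ℓ := by
    intro ℓ i j
    rw [hMmat, hMmat]
    exact congrArg _ (funext fun ξ => by ring)
  intro t x i
  constructor
  · -- differentiability of coefficients in each variable
    have hρx : ∀ (y : ℝ) k, DifferentiableAt ℝ (fun y' => ρt t y' k) y := fun y k =>
      (((hρC1 k).differentiable one_ne_zero).comp
        ((differentiable_const t).prodMk differentiable_id)) y
    have hqx : ∀ (y : ℝ) k, DifferentiableAt ℝ (fun y' => qt t y' k) y := fun y k =>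
      (((hqC1 k).differentiable one_ne_zero).comp
        ((differentiable_const t).prodMk differentiable_id)) y
    have hρs : ∀ (s : ℝ) k, DifferentiableAt ℝ (fun s' => ρt s' x k) s := fun s k =>
      (((hρC1 k).differentiable one_ne_zero).comp
        (differentiable_id.prodMk (differentiable_const x))) s
    -- derivatives of the random fields
    have Hρt : ∀ ξ, HasDerivAt (fun s => ρf s x ξ)
        (∑ k, deriv (fun s => ρt s x k) t * φ k ξ) t := by
      intro ξ
      have h : (fun s => ρf s x ξ) = fun s => ∑ k, ρt s x k * φ k ξ :=
        funext fun s => hρf s x ξ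
      rw [h]
      exact HasDerivAt.fun_sum fun k _ => ((hρs t k).hasDerivAt.mul_const _)
    have Hρxf : ∀ ξ, HasDerivAt (fun y => ρf t y ξ)
        (∑ k, deriv (fun y => ρt t y k) x * φ k ξ) x := by
      intro ξ
      have h : (fun y => ρf t y ξ) = fun y => ∑ k, ρt t y k * φ k ξ :=
        funext fun y => hρf t y ξ
      rw [h]
      exact HasDerivAt.fun_sum fun k _ => ((hρx x k).hasDerivAt.mul_const _)
    have Hqxf : ∀ ξ, HasDerivAt (fun y => qf t y ξ)
        (∑ k, deriv (fun y => qt t y k) x * φ k ξ) x := by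
      intro ξ
      have h : (fun y => qf t y ξ) = fun y => ∑ k, qt t y k * φ k ξ :=
        funext fun y => hqf t y ξ
      rw [h]
      exact HasDerivAt.fun_sum fun k _ => ((hqx x k).hasDerivAt.mul_const _)
    -- a.e. identity for the projected mass equation
    have aeq : ∀ᵐ ξ ∂(volume.restrict Ω),
        (∑ k, (deriv (fun s => ρt s x k) t + deriv (fun y => qt t y k) x) * φ k ξ)
          = (∑ j, (2 * ρt t x j) * φ j ξ)
              * (∑ ℓ, deriv (fun y => ρt t y ℓ) x * φ ℓ ξ) := by
      filter_upwards [hae] with ξ h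
      obtain ⟨-, h1, -⟩ := h t x
      have e1 := (Hρt ξ).deriv
      have Hsub : HasDerivAt (fun y => qf t y ξ - (ρf t y ξ) ^ 2)
          ((∑ k, deriv (fun y => qt t y k) x * φ k ξ)
            - (2 : ℕ) * (ρf t x ξ) ^ (2 - 1)
                * (∑ k, deriv (fun y => ρt t y k) x * φ k ξ)) x :=
        (Hqxf ξ).sub ((Hρxf ξ).pow 2)
      have e2 := Hsub.deriv
      rw [e1, e2, hρf t x ξ] at h1
      simp only [add_mul, Finset.sum_add_distrib]
      push_cast at h1
      have hmul : (∑ j, 2 * ρt t x j * φ j ξ) = 2 * ∑ j, ρt t x j * φ j ξ := by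
        rw [Finset.mul_sum]
        exact Finset.sum_congr rfl fun j _ => by ring
      rw [hmul]
      linear_combination h1
    -- project onto φ i
    have key : deriv (fun s => ρt s x i) t + deriv (fun y => qt t y i) x
        = ∑ j, ∑ ℓ, (2 * ρt t x j) * deriv (fun y => ρt t y ℓ) x * Mmat ℓ i j := by
      have hL := proj_eq horth hpair
        (g := fun ξ => ∑ k, (deriv (fun s => ρt s x k) t
          + deriv (fun y => qt t y k) x) * φ k ξ)
        (c := fun k => deriv (fun s => ρt s x k) t + deriv (fun y => qt t y k) x)
        (Filter.Eventually.of_forall fun ξ => rfl) i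
      have hR := proj_mul htriple hMmat
        (g := fun ξ => ∑ ℓ, deriv (fun y => ρt t y ℓ) x * φ ℓ ξ)
        (u := fun j => 2 * ρt t x j)
        (c := fun ℓ => deriv (fun y => ρt t y ℓ) x)
        (Filter.Eventually.of_forall fun ξ => rfl) i
      have hcong : (∫ ξ in Ω, (∑ k, (deriv (fun s => ρt s x k) t
            + deriv (fun y => qt t y k) x) * φ k ξ) * φ i ξ * fΞ ξ)
          = ∫ ξ in Ω, (∑ j, (2 * ρt t x j) * φ j ξ)
              * (∑ ℓ, deriv (fun y => ρt t y ℓ) x * φ ℓ ξ) * φ i ξ * fΞ ξ := by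
        refine integral_congr_ae ?_
        filter_upwards [aeq] with ξ h
        rw [h]
      rw [← hL, hcong, hR]
    -- derivative of the Galerkin flux
    have HB : HasDerivAt (fun y => (∑ ℓ, ρt t y ℓ • Mmat ℓ).mulVec (ρt t y) i)
        (∑ j, ∑ ℓ, (deriv (fun y => ρt t y ℓ) x * Mmat ℓ i j * ρt t x j
          + ρt t x ℓ * Mmat ℓ i j * deriv (fun y => ρt t y j) x)) x := by
      have h : (fun y => (∑ ℓ, ρt t y ℓ • Mmat ℓ).mulVec (ρt t y) i)
          = fun y => ∑ j, ∑ ℓ, ρt t y ℓ * Mmat ℓ i j * ρt t y j :=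
        funext fun y => mulVec_form Mmat _ _ i
      rw [h]
      refine HasDerivAt.fun_sum fun j _ => HasDerivAt.fun_sum fun ℓ _ => ?_
      exact ((hρx x ℓ).hasDerivAt.mul_const (Mmat ℓ i j)).mul (hρx x j).hasDerivAt
    have hval : (∑ j, ∑ ℓ, (deriv (fun y => ρt t y ℓ) x * Mmat ℓ i j * ρt t x j
          + ρt t x ℓ * Mmat ℓ i j * deriv (fun y => ρt t y j) x))
        = ∑ j, ∑ ℓ, (2 * ρt t x j) * deriv (fun y => ρt t y ℓ) x * Mmat ℓ i j := by
      have hs : ∀ j ℓ, deriv (fun y => ρt t y ℓ) x * Mmat ℓ i j * ρt t x j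
            + ρt t x ℓ * Mmat ℓ i j * deriv (fun y => ρt t y j) x
          = (ρt t x j * deriv (fun y => ρt t y ℓ) x) * Mmat ℓ i j
            + (ρt t x ℓ * deriv (fun y => ρt t y j) x) * Mmat ℓ i j := fun j ℓ => by ring
      simp only [hs, Finset.sum_add_distrib]
      have h2 := sum2_swap Msym (fun j ℓ => ρt t x ℓ * deriv (fun y => ρt t y j) x) i
      rw [h2]
      rw [← Finset.sum_add_distrib]
      simp only [← Finset.sum_add_distrib]
      exact Finset.sum_congr rfl fun j _ => Finset.sum_congr rfl fun ℓ _ => by ring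
    have Hfull : HasDerivAt (fun y => qt t y i
        - (∑ ℓ, ρt t y ℓ • Mmat ℓ).mulVec (ρt t y) i)
        (deriv (fun y => qt t y i) x
          - ∑ j, ∑ ℓ, (deriv (fun y => ρt t y ℓ) x * Mmat ℓ i j * ρt t x j
            + ρt t x ℓ * Mmat ℓ i j * deriv (fun y => ρt t y j) x)) x :=
      (hqx x i).hasDerivAt.sub HB
    rw [Hfull.deriv, hval]
    linarith [key]
  · have hρx : ∀ (y : ℝ) k, DifferentiableAt ℝ (fun y' => ρt t y' k) y := fun y k =>
      (((hρC1 k).differentiable one_ne_zero).comp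
        ((differentiable_const t).prodMk differentiable_id)) y
    have hqx : ∀ (y : ℝ) k, DifferentiableAt ℝ (fun y' => qt t y' k) y := fun y k =>
      (((hqC1 k).differentiable one_ne_zero).comp
        ((differentiable_const t).prodMk differentiable_id)) y
    have hqs : ∀ (s : ℝ) k, DifferentiableAt ℝ (fun s' => qt s' x k) s := fun s k =>
      (((hqC1 k).differentiable one_ne_zero).comp
        (differentiable_id.prodMk (differentiable_const x))) s
    -- determinant and inverse facts
    have hdet : ∀ y : ℝ, IsUnit (∑ ℓ, ρt t y ℓ • Mmat ℓ).det := fun y =>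
      (Matrix.isUnit_iff_isUnit_det _).1 (hinv t y)
    have hdet0 : ∀ y : ℝ, (∑ ℓ, ρt t y ℓ • Mmat ℓ).det ≠ 0 := fun y => (hdet y).ne_zero
    have hAd : ∀ (y : ℝ) k l, DifferentiableAt ℝ
        (fun y' => (∑ ℓ, ρt t y' ℓ • Mmat ℓ) k l) y := by
      intro y k l
      have h : (fun y' => (∑ ℓ, ρt t y' ℓ • Mmat ℓ) k l)
          = fun y' => ∑ ℓ, ρt t y' ℓ * Mmat ℓ k l := by
        funext y'
        simp [Matrix.sum_apply, Matrix.smul_apply]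
      rw [h]
      exact DifferentiableAt.fun_sum fun ℓ _ => (hρx y ℓ).mul_const _
    have hQd : ∀ (y : ℝ) k l, DifferentiableAt ℝ
        (fun y' => (∑ ℓ, qt t y' ℓ • Mmat ℓ) k l) y := by
      intro y k l
      have h : (fun y' => (∑ ℓ, qt t y' ℓ • Mmat ℓ) k l)
          = fun y' => ∑ ℓ, qt t y' ℓ * Mmat ℓ k l := by
        funext y'
        simp [Matrix.sum_apply, Matrix.smul_apply]
      rw [h]
      exact DifferentiableAt.fun_sum fun ℓ _ => (hqx y ℓ).mul_const _
    have hInvd : ∀ (y : ℝ) k l, DifferentiableAt ℝ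
        (fun y' => (∑ ℓ, ρt t y' ℓ • Mmat ℓ)⁻¹ k l) y := fun y k l =>
      inv_entry_diffAt (fun k' l' => hAd y k' l') (hdet0 y) k l
    have hGd : ∀ (y : ℝ) ℓ0, DifferentiableAt ℝ (fun y' =>
        ((∑ ℓ, qt t y' ℓ • Mmat ℓ)
          * (∑ ℓ, ρt t y' ℓ • Mmat ℓ)⁻¹).mulVec (qt t y') ℓ0) y := by
      intro y ℓ0
      have h : (fun y' => ((∑ ℓ, qt t y' ℓ • Mmat ℓ)
            * (∑ ℓ, ρt t y' ℓ • Mmat ℓ)⁻¹).mulVec (qt t y') ℓ0)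
          = fun y' => ∑ j, (∑ k, (∑ ℓ, qt t y' ℓ • Mmat ℓ) ℓ0 k
              * (∑ ℓ, ρt t y' ℓ • Mmat ℓ)⁻¹ k j) * qt t y' j := by
        funext y'
        simp [Matrix.mulVec, dotProduct, Matrix.mul_apply]
      rw [h]
      exact DifferentiableAt.fun_sum fun j _ => (DifferentiableAt.fun_sum fun k _ =>
        (hQd y ℓ0 k).mul (hInvd y k j)).mul (hqx y j)
    have hBd : ∀ (y : ℝ) ℓ0, DifferentiableAt ℝ
        (fun y' => (∑ ℓ, ρt t y' ℓ • Mmat ℓ).mulVec (qt t y') ℓ0) y := by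
      intro y ℓ0
      have h : (fun y' => (∑ ℓ, ρt t y' ℓ • Mmat ℓ).mulVec (qt t y') ℓ0)
          = fun y' => ∑ j, ∑ ℓ, ρt t y' ℓ * Mmat ℓ ℓ0 j * qt t y' j :=
        funext fun y' => mulVec_form Mmat _ _ ℓ0
      rw [h]
      exact DifferentiableAt.fun_sum fun j _ => DifferentiableAt.fun_sum fun ℓ _ =>
        ((hρx y ℓ).mul_const _).mul (hqx y j)
    -- K1 : the fixed-(t,y) span identity with identified coefficients
    have K1 : ∀ y : ℝ, ∀ᵐ ξ ∂(volume.restrict Ω),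
        (qf t y ξ) ^ 2 / ρf t y ξ - qf t y ξ * ρf t y ξ
          = ∑ ℓ, (((∑ ℓ', qt t y ℓ' • Mmat ℓ')
                * (∑ ℓ', ρt t y ℓ' • Mmat ℓ')⁻¹).mulVec (qt t y) ℓ
              - (∑ ℓ', ρt t y ℓ' • Mmat ℓ').mulVec (qt t y) ℓ) * φ ℓ ξ := by
      intro y
      obtain ⟨a, b, c, d, hspan'⟩ := hspan t y
      have hρne : ∀ᵐ ξ ∂(volume.restrict Ω), ρf t y ξ ≠ 0 :=
        hae.mono fun ξ h => (h t y).1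
      have hcsp : ∀ᵐ ξ ∂(volume.restrict Ω),
          qf t y ξ / ρf t y ξ = ∑ ℓ, c ℓ * φ ℓ ξ := hspan'.mono fun ξ h => h.2.2.1
      have hdsp : ∀ᵐ ξ ∂(volume.restrict Ω),
          (qf t y ξ) ^ 2 / ρf t y ξ = ∑ ℓ, d ℓ * φ ℓ ξ := hspan'.mono fun ξ h => h.2.2.2
      have hbsp : ∀ᵐ ξ ∂(volume.restrict Ω),
          ρf t y ξ * qf t y ξ = ∑ ℓ, b ℓ * φ ℓ ξ := hspan'.mono fun ξ h => h.2.1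
      -- c is determined: P(ρ̃) c = q̃
      have hPc : (∑ ℓ, ρt t y ℓ • Mmat ℓ).mulVec c = qt t y := by
        funext ℓ0
        have h1 : ∫ ξ in Ω, qf t y ξ * φ ℓ0 ξ * fΞ ξ = qt t y ℓ0 :=
          proj_eq horth hpair (Filter.Eventually.of_forall fun ξ => hqf t y ξ) ℓ0
        have h2 : ∫ ξ in Ω, (∑ j, ρt t y j * φ j ξ) * (qf t y ξ / ρf t y ξ)
              * φ ℓ0 ξ * fΞ ξ = ∑ j, ∑ ℓ, ρt t y j * c ℓ * Mmat ℓ ℓ0 j :=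
          proj_mul htriple hMmat hcsp ℓ0
        have h3 : ∫ ξ in Ω, (∑ j, ρt t y j * φ j ξ) * (qf t y ξ / ρf t y ξ)
              * φ ℓ0 ξ * fΞ ξ = ∫ ξ in Ω, qf t y ξ * φ ℓ0 ξ * fΞ ξ := by
          refine integral_congr_ae ?_
          filter_upwards [hρne] with ξ hne
          rw [← hρf t y ξ]
          have : ρf t y ξ * (qf t y ξ / ρf t y ξ) = qf t y ξ := by field_simp
          rw [this]
        rw [alg2 Msym] at h2
        rw [h3, h1] at h2
        exact h2.symm
      have hceq : c = (∑ ℓ, ρt t y ℓ • Mmat ℓ)⁻¹.mulVec (qt t y) := by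
        rw [← hPc, Matrix.mulVec_mulVec, Matrix.nonsing_inv_mul _ (hdet y),
          Matrix.one_mulVec]
      -- d is determined
      have hdeq : ∀ ℓ0, d ℓ0 = ((∑ ℓ', qt t y ℓ' • Mmat ℓ')
          * (∑ ℓ', ρt t y ℓ' • Mmat ℓ')⁻¹).mulVec (qt t y) ℓ0 := by
        intro ℓ0
        have h1 : ∫ ξ in Ω, ((qf t y ξ) ^ 2 / ρf t y ξ) * φ ℓ0 ξ * fΞ ξ = d ℓ0 :=
          proj_eq horth hpair hdsp ℓ0
        have h2 : ∫ ξ in Ω, (∑ j, qt t y j * φ j ξ) * (qf t y ξ / ρf t y ξ)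
              * φ ℓ0 ξ * fΞ ξ = ∑ j, ∑ ℓ, qt t y j * c ℓ * Mmat ℓ ℓ0 j :=
          proj_mul htriple hMmat hcsp ℓ0
        have h3 : ∫ ξ in Ω, (∑ j, qt t y j * φ j ξ) * (qf t y ξ / ρf t y ξ)
              * φ ℓ0 ξ * fΞ ξ
            = ∫ ξ in Ω, ((qf t y ξ) ^ 2 / ρf t y ξ) * φ ℓ0 ξ * fΞ ξ := by
          refine integral_congr_ae ?_
          filter_upwards [hρne] with ξ hne
          rw [← hqf t y ξ]
          have : qf t y ξ * (qf t y ξ / ρf t y ξ) = (qf t y ξ) ^ 2 / ρf t y ξ := by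
            field_simp
          rw [this]
        rw [alg2 Msym, hceq, Matrix.mulVec_mulVec] at h2
        rw [h3, h1] at h2
        exact h2
      -- b is determined
      have hbeq : ∀ ℓ0, b ℓ0 = (∑ ℓ', ρt t y ℓ' • Mmat ℓ').mulVec (qt t y) ℓ0 := by
        intro ℓ0
        have h1 : ∫ ξ in Ω, (ρf t y ξ * qf t y ξ) * φ ℓ0 ξ * fΞ ξ = b ℓ0 :=
          proj_eq horth hpair hbsp ℓ0
        have h2 : ∫ ξ in Ω, (∑ j, ρt t y j * φ j ξ) * qf t y ξ * φ ℓ0 ξ * fΞ ξ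
            = ∑ j, ∑ ℓ, ρt t y j * qt t y ℓ * Mmat ℓ ℓ0 j :=
          proj_mul htriple hMmat (Filter.Eventually.of_forall fun ξ => hqf t y ξ) ℓ0
        have h3 : ∫ ξ in Ω, (∑ j, ρt t y j * φ j ξ) * qf t y ξ * φ ℓ0 ξ * fΞ ξ
            = ∫ ξ in Ω, (ρf t y ξ * qf t y ξ) * φ ℓ0 ξ * fΞ ξ := by
          refine integral_congr_ae ?_
          filter_upwards with ξ
          rw [← hρf t y ξ]
        rw [alg2 Msym] at h2
        rw [h3, h1] at h2
        exact h2
      filter_upwards [hdsp, hbsp] with ξ h4 h5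
      rw [h4, mul_comm (qf t y ξ) (ρf t y ξ), h5, ← Finset.sum_sub_distrib]
      exact Finset.sum_congr rfl fun ℓ _ => by rw [hdeq ℓ, hbeq ℓ]; ring
    -- K2 : upgrade to a single a.e. set, for all y, by density and continuity
    have K2 : ∀ᵐ ξ ∂(volume.restrict Ω), ∀ y : ℝ,
        (qf t y ξ) ^ 2 / ρf t y ξ - qf t y ξ * ρf t y ξ
          = ∑ ℓ, (((∑ ℓ', qt t y ℓ' • Mmat ℓ')
                * (∑ ℓ', ρt t y ℓ' • Mmat ℓ')⁻¹).mulVec (qt t y) ℓ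
              - (∑ ℓ', ρt t y ℓ' • Mmat ℓ').mulVec (qt t y) ℓ) * φ ℓ ξ := by
      have hQ : ∀ᵐ ξ ∂(volume.restrict Ω), ∀ r : ℚ,
          (qf t (r : ℝ) ξ) ^ 2 / ρf t (r : ℝ) ξ - qf t (r : ℝ) ξ * ρf t (r : ℝ) ξ
            = ∑ ℓ, (((∑ ℓ', qt t (r : ℝ) ℓ' • Mmat ℓ')
                  * (∑ ℓ', ρt t (r : ℝ) ℓ' • Mmat ℓ')⁻¹).mulVec (qt t (r : ℝ)) ℓ
                - (∑ ℓ', ρt t (r : ℝ) ℓ' • Mmat ℓ').mulVec (qt t (r : ℝ)) ℓ) * φ ℓ ξ :=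
        (MeasureTheory.ae_all_iff).2 fun r => K1 (r : ℝ)
      filter_upwards [hQ, hae] with ξ h1 h2
      have hρc : Continuous (fun y => ρf t y ξ) := by
        have h : (fun y => ρf t y ξ) = fun y => ∑ k, ρt t y k * φ k ξ :=
          funext fun y => hρf t y ξ
        rw [h]
        exact continuous_finset_sum _ fun k _ =>
          (Differentiable.continuous fun y => hρx y k).mul continuous_const
      have hqc : Continuous (fun y => qf t y ξ) := by
        have h : (fun y => qf t y ξ) = fun y => ∑ k, qt t y k * φ k ξ :=
          funext fun y => hqf t y ξ
        rw [h]
        exact continuous_finset_sum _ fun k _ =>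
          (Differentiable.continuous fun y => hqx y k).mul continuous_const
      have hL : Continuous (fun y => (qf t y ξ) ^ 2 / ρf t y ξ - qf t y ξ * ρf t y ξ) :=
        ((hqc.pow 2).div hρc fun y => (h2 t y).1).sub (hqc.mul hρc)
      have hR : Continuous (fun y => ∑ ℓ, (((∑ ℓ', qt t y ℓ' • Mmat ℓ')
            * (∑ ℓ', ρt t y ℓ' • Mmat ℓ')⁻¹).mulVec (qt t y) ℓ
          - (∑ ℓ', ρt t y ℓ' • Mmat ℓ').mulVec (qt t y) ℓ) * φ ℓ ξ) :=
        continuous_finset_sum _ fun ℓ _ =>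
          (((Differentiable.continuous fun y => hGd y ℓ).sub
            (Differentiable.continuous fun y => hBd y ℓ)).mul continuous_const)
      have heqon : Set.EqOn
          (fun y => (qf t y ξ) ^ 2 / ρf t y ξ - qf t y ξ * ρf t y ξ)
          (fun y => ∑ ℓ, (((∑ ℓ', qt t y ℓ' • Mmat ℓ')
                * (∑ ℓ', ρt t y ℓ' • Mmat ℓ')⁻¹).mulVec (qt t y) ℓ
              - (∑ ℓ', ρt t y ℓ' • Mmat ℓ').mulVec (qt t y) ℓ) * φ ℓ ξ)
          (Set.range (Rat.cast : ℚ → ℝ)) := by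
        rintro y' ⟨r, rfl⟩
        exact h1 r
      have heq := Continuous.ext_on Rat.denseRange_cast hL hR heqon
      intro y
      exact congrFun heq y
    -- K3 : project the momentum equation
    have K3 : ∀ᵐ ξ ∂(volume.restrict Ω),
        (∑ ℓ, (deriv (fun s => qt s x ℓ) t
            + deriv (fun y => ((∑ ℓ', qt t y ℓ' • Mmat ℓ')
                * (∑ ℓ', ρt t y ℓ' • Mmat ℓ')⁻¹).mulVec (qt t y) ℓ
              - (∑ ℓ', ρt t y ℓ' • Mmat ℓ').mulVec (qt t y) ℓ) x) * φ ℓ ξ)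
          = (1 / ε) * (ρf t x ξ * Veq (ρf t x ξ) + (ρf t x ξ) ^ 2 - qf t x ξ) := by
      filter_upwards [K2, hae] with ξ hK2 h
      obtain ⟨-, -, h3⟩ := h t x
      have e1 : deriv (fun s => qf s x ξ) t
          = ∑ k, deriv (fun s => qt s x k) t * φ k ξ := by
        have hfun : (fun s => qf s x ξ) = fun s => ∑ k, qt s x k * φ k ξ :=
          funext fun s => hqf s x ξ
        rw [hfun]
        exact (HasDerivAt.fun_sum fun k _ => ((hqs t k).hasDerivAt.mul_const _)).deriv
      have hfun2 : (fun y => (qf t y ξ) ^ 2 / ρf t y ξ - qf t y ξ * ρf t y ξ)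
          = fun y => ∑ ℓ, (((∑ ℓ', qt t y ℓ' • Mmat ℓ')
                * (∑ ℓ', ρt t y ℓ' • Mmat ℓ')⁻¹).mulVec (qt t y) ℓ
              - (∑ ℓ', ρt t y ℓ' • Mmat ℓ').mulVec (qt t y) ℓ) * φ ℓ ξ :=
        funext fun y => hK2 y
      have e2 : deriv (fun y => (qf t y ξ) ^ 2 / ρf t y ξ - qf t y ξ * ρf t y ξ) x
          = ∑ ℓ, deriv (fun y => ((∑ ℓ', qt t y ℓ' • Mmat ℓ')
                * (∑ ℓ', ρt t y ℓ' • Mmat ℓ')⁻¹).mulVec (qt t y) ℓ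
              - (∑ ℓ', ρt t y ℓ' • Mmat ℓ').mulVec (qt t y) ℓ) x * φ ℓ ξ := by
        rw [hfun2]
        exact (HasDerivAt.fun_sum fun ℓ _ =>
          (((hGd x ℓ).sub (hBd x ℓ)).hasDerivAt.mul_const _)).deriv
      rw [e1, e2] at h3
      rw [← h3]
      simp only [add_mul, Finset.sum_add_distrib]
    -- final projection onto φ i
    have hL := proj_eq horth hpair
      (g := fun ξ => ∑ ℓ, (deriv (fun s => qt s x ℓ) t
          + deriv (fun y => ((∑ ℓ', qt t y ℓ' • Mmat ℓ')
              * (∑ ℓ', ρt t y ℓ' • Mmat ℓ')⁻¹).mulVec (qt t y) ℓ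
            - (∑ ℓ', ρt t y ℓ' • Mmat ℓ').mulVec (qt t y) ℓ) x) * φ ℓ ξ)
      (c := fun ℓ => deriv (fun s => qt s x ℓ) t
          + deriv (fun y => ((∑ ℓ', qt t y ℓ' • Mmat ℓ')
              * (∑ ℓ', ρt t y ℓ' • Mmat ℓ')⁻¹).mulVec (qt t y) ℓ
            - (∑ ℓ', ρt t y ℓ' • Mmat ℓ').mulVec (qt t y) ℓ) x)
      (Filter.Eventually.of_forall fun ξ => rfl) i
    have hcong : (∫ ξ in Ω, (∑ ℓ, (deriv (fun s => qt s x ℓ) t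
          + deriv (fun y => ((∑ ℓ', qt t y ℓ' • Mmat ℓ')
              * (∑ ℓ', ρt t y ℓ' • Mmat ℓ')⁻¹).mulVec (qt t y) ℓ
            - (∑ ℓ', ρt t y ℓ' • Mmat ℓ').mulVec (qt t y) ℓ) x) * φ ℓ ξ) * φ i ξ * fΞ ξ)
        = ∫ ξ in Ω, ((1 / ε) * (ρf t x ξ * Veq (ρf t x ξ)
            + (ρf t x ξ) ^ 2 - qf t x ξ)) * φ i ξ * fΞ ξ := by
      refine integral_congr_ae ?_
      filter_upwards [K3] with ξ h
      rw [h]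
    -- compute the right-hand side integral
    have hsplit : (fun ξ => ((1 / ε) * (ρf t x ξ * Veq (ρf t x ξ)
          + (ρf t x ξ) ^ 2 - qf t x ξ)) * φ i ξ * fΞ ξ)
        = fun ξ => (1 / ε) * (((∑ j, ρt t x j * φ j ξ) * Veq (ρf t x ξ) * φ i ξ * fΞ ξ)
            + ((∑ j, ρt t x j * φ j ξ) * ρf t x ξ * φ i ξ * fΞ ξ)
            - (qf t x ξ * φ i ξ * fΞ ξ)) := by
      funext ξ
      rw [← hρf t x ξ]
      ring
    have int1 : IntegrableOn (fun ξ => (∑ j, ρt t x j * φ j ξ)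
        * Veq (ρf t x ξ) * φ i ξ * fΞ ξ) Ω :=
      prod_span_integrable htriple (hVspan t x) i
    have int2 : IntegrableOn (fun ξ => (∑ j, ρt t x j * φ j ξ)
        * ρf t x ξ * φ i ξ * fΞ ξ) Ω :=
      prod_span_integrable htriple (Filter.Eventually.of_forall fun ξ => hρf t x ξ) i
    have int3 : IntegrableOn (fun ξ => qf t x ξ * φ i ξ * fΞ ξ) Ω :=
      span_integrable hpair (Filter.Eventually.of_forall fun ξ => hqf t x ξ) i
    have val1 : ∫ ξ in Ω, (∑ j, ρt t x j * φ j ξ) * Veq (ρf t x ξ) * φ i ξ * fΞ ξ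
        = (∑ ℓ, Vt t x ℓ • Mmat ℓ).mulVec (ρt t x) i := by
      rw [proj_mul htriple hMmat (hVspan t x) i]
      exact alg1 Mmat _ _ i
    have val2 : ∫ ξ in Ω, (∑ j, ρt t x j * φ j ξ) * ρf t x ξ * φ i ξ * fΞ ξ
        = (∑ ℓ, ρt t x ℓ • Mmat ℓ).mulVec (ρt t x) i := by
      rw [proj_mul htriple hMmat (Filter.Eventually.of_forall fun ξ => hρf t x ξ) i]
      exact alg1 Mmat _ _ i
    have val3 : ∫ ξ in Ω, qf t x ξ * φ i ξ * fΞ ξ = qt t x i :=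
      proj_eq horth hpair (Filter.Eventually.of_forall fun ξ => hqf t x ξ) i
    have hRHS : (∫ ξ in Ω, ((1 / ε) * (ρf t x ξ * Veq (ρf t x ξ)
          + (ρf t x ξ) ^ 2 - qf t x ξ)) * φ i ξ * fΞ ξ)
        = (1 / ε) * ((∑ ℓ, Vt t x ℓ • Mmat ℓ).mulVec (ρt t x) i
            + (∑ ℓ, ρt t x ℓ • Mmat ℓ).mulVec (ρt t x) i - qt t x i) := by
      have int12 : IntegrableOn (fun ξ => (∑ j, ρt t x j * φ j ξ)
          * Veq (ρf t x ξ) * φ i ξ * fΞ ξ + (∑ j, ρt t x j * φ j ξ)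
          * ρf t x ξ * φ i ξ * fΞ ξ) Ω := int1.add int2
      rw [hsplit, MeasureTheory.integral_const_mul]
      rw [integral_sub int12 int3, integral_add int1 int2, val1, val2, val3]
    rw [hL] at hcong
    rw [hRHS] at hcong
    exact hcong
end
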